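/- Let A be a unital C*-algebra and x, y self-adjoint elements of A. Then lim_{n→∞} n · ‖log( e^{-x/(2n)} e^{y/n} e^{-x/(2n)} )‖ = ‖y − x‖. In particular the Thompson metric satisfies lim_{n→∞} n · d_T(e^{x/n}, e^{y/n}) = ‖x − y‖. -/

import Mathlib

open Filter

/-- The inverse square root `x^{-1/2}` via the continuous functional calculus. -/
noncomputable def invSqrt {A : Type*} [CStarAlgebra A] (x : A) : A :=
  cfc (fun t : ℝ => (Real.sqrt t)⁻¹) x

/-- The Thompson metric of positive invertible elements, via the formula
`d_T(x,y) = ‖log (x^{-1/2} y x^{-1/2})‖`. -/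
noncomputable def thompsonDistLog {A : Type*} [CStarAlgebra A] (x y : A) : ℝ :=
  ‖cfc Real.log (invSqrt x * y * invSqrt x)‖

section Aux

variable {A : Type*} [CStarAlgebra A]

private lemma exp_remainder_bound' (a : A) :
    ‖NormedSpace.exp a - 1 - a‖ ≤ ‖a‖ ^ 2 * Real.exp ‖a‖ := by
  set f : ℕ → A := fun n => ((n.factorial)⁻¹ : ℂ) • a ^ n with hf
  have hsum : Summable f := NormedSpace.expSeries_summable' (𝕂 := ℂ) a
  have h1 : Summable fun n => f (n + 1) := (summable_nat_add_iff 1).2 hsum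
  have h2 : Summable fun n => f (n + 2) := (summable_nat_add_iff 2).2 hsum
  have hexp : NormedSpace.exp a = f 0 + (f 1 + ∑' n, f (n + 2)) := by
    rw [NormedSpace.exp_eq_tsum ℂ]
    show ∑' n, f n = _
    rw [Summable.tsum_eq_zero_add hsum, Summable.tsum_eq_zero_add h1]
  have hf0 : f 0 = 1 := by simp [hf]
  have hf1 : f 1 = a := by simp [hf]
  have key : NormedSpace.exp a - 1 - a = ∑' n, f (n + 2) := by
    rw [hexp, hf0, hf1]; abel
  rw [key]
  have hnorm : Summable fun n => ‖f (n + 2)‖ := by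
    have := (NormedSpace.norm_expSeries_summable' (𝕂 := ℂ) a)
    exact (summable_nat_add_iff 2).2 this
  have hrhs : Summable fun n : ℕ => ‖a‖ ^ 2 * (‖a‖ ^ n / n.factorial) :=
    (Real.summable_pow_div_factorial ‖a‖).mul_left _
  calc ‖∑' n, f (n + 2)‖ ≤ ∑' n, ‖f (n + 2)‖ := norm_tsum_le_tsum_norm hnorm
    _ ≤ ∑' n : ℕ, ‖a‖ ^ 2 * (‖a‖ ^ n / n.factorial) := by
        refine Summable.tsum_le_tsum (fun n => ?_) hnorm hrhs
        have hb : ‖f (n + 2)‖ ≤ ((n + 2).factorial : ℝ)⁻¹ * ‖a‖ ^ (n + 2) := by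
          rw [hf, norm_smul]
          gcongr
          · simp
          · exact norm_pow_le' a (Nat.succ_pos _)
        refine hb.trans ?_
        have hfac : ((n + 2).factorial : ℝ)⁻¹ ≤ (n.factorial : ℝ)⁻¹ := by
          apply inv_anti₀
          · positivity
          · exact_mod_cast Nat.factorial_le (by omega)
        calc ((n + 2).factorial : ℝ)⁻¹ * ‖a‖ ^ (n + 2)
            ≤ (n.factorial : ℝ)⁻¹ * ‖a‖ ^ (n + 2) := by gcongr
          _ = ‖a‖ ^ 2 * (‖a‖ ^ n / n.factorial) := by ring
    _ = ‖a‖ ^ 2 * ∑' n : ℕ, (‖a‖ ^ n / n.factorial) := tsum_mul_left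
    _ = ‖a‖ ^ 2 * Real.exp ‖a‖ := by
        rw [Real.exp_eq_exp_ℝ, NormedSpace.exp_eq_tsum_div]

private lemma norm_one_le'' : ‖(1 : A)‖ ≤ 1 := by
  rcases subsingleton_or_nontrivial A with h | h
  · simp [Subsingleton.elim (1 : A) 0]
  · exact le_of_eq CStarRing.norm_one

private lemma norm_exp_le_of_le_one' {a : A} (ha : ‖a‖ ≤ 1) : ‖NormedSpace.exp a‖ ≤ 5 := by
  have h := exp_remainder_bound' a
  have h2 : Real.exp ‖a‖ ≤ Real.exp 1 := Real.exp_le_exp.2 ha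
  have h3 : Real.exp 1 ≤ 3 := by
    have := Real.exp_one_lt_d9; linarith
  have e : NormedSpace.exp a = (NormedSpace.exp a - 1 - a) + 1 + a := by abel
  have h4 : ‖NormedSpace.exp a‖ ≤ ‖NormedSpace.exp a - 1 - a‖ + ‖(1 : A)‖ + ‖a‖ := by
    nth_rewrite 1 [e]; exact norm_add₃_le
  have h5 : ‖(1:A)‖ ≤ 1 := norm_one_le''
  nlinarith [norm_nonneg a, Real.exp_pos ‖a‖, sq_nonneg ‖a‖]

private lemma triple_bound' (a b : A) (ha : ‖a‖ ≤ 1) (hb : ‖b‖ ≤ 1) :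
    ‖NormedSpace.exp a * NormedSpace.exp b * NormedSpace.exp a - 1 - a - a - b‖
      ≤ 200 * (‖a‖ + ‖b‖) ^ 2 := by
  set u := NormedSpace.exp a with hu
  set v := NormedSpace.exp b with hv
  set Ea := u - 1 - a with hEa
  set Eb := v - 1 - b with hEb
  set D1 := u * v - (1 + a) * (1 + b) with hD1
  have bEa : ‖Ea‖ ≤ 3 * ‖a‖ ^ 2 := by
    have := exp_remainder_bound' a
    have h2 : Real.exp ‖a‖ ≤ 3 := by
      have := Real.exp_one_lt_d9
      have := Real.exp_le_exp.2 ha; linarith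
    nlinarith [sq_nonneg ‖a‖]
  have bEb : ‖Eb‖ ≤ 3 * ‖b‖ ^ 2 := by
    have := exp_remainder_bound' b
    have h2 : Real.exp ‖b‖ ≤ 3 := by
      have := Real.exp_one_lt_d9
      have := Real.exp_le_exp.2 hb; linarith
    nlinarith [sq_nonneg ‖b‖]
  have bu : ‖u‖ ≤ 5 := norm_exp_le_of_le_one' ha
  have one_le : ‖(1:A)‖ ≤ 1 := norm_one_le''
  have n1a : ‖(1:A) + a‖ ≤ 2 := (norm_add_le _ _).trans (by linarith)
  have n1b : ‖(1:A) + b‖ ≤ 2 := (norm_add_le _ _).trans (by linarith)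
  have bD1 : ‖D1‖ ≤ 2 * (3 * ‖b‖^2) + (3 * ‖a‖^2) * 2 + (3*‖a‖^2) * (3*‖b‖^2) := by
    have e1 : D1 = (1 + a) * Eb + Ea * (1 + b) + Ea * Eb := by
      rw [hD1, hEa, hEb]; noncomm_ring
    rw [e1]
    refine (norm_add₃_le).trans ?_
    have p1 : ‖(1 + a) * Eb‖ ≤ 2 * (3 * ‖b‖^2) :=
      (norm_mul_le _ _).trans (mul_le_mul n1a bEb (norm_nonneg _) (by norm_num))
    have p2 : ‖Ea * (1 + b)‖ ≤ (3 * ‖a‖^2) * 2 :=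
      (norm_mul_le _ _).trans (mul_le_mul bEa n1b (norm_nonneg _) (by positivity))
    have p3 : ‖Ea * Eb‖ ≤ (3*‖a‖^2) * (3*‖b‖^2) :=
      (norm_mul_le _ _).trans (mul_le_mul bEa bEb (norm_nonneg _) (by positivity))
    linarith
  have e4 : u * v * u - 1 - a - a - b
      = (1 + a) * (1 + b) * Ea + D1 * u + (a*b + b*a + a*a + a*b*a) := by
    rw [hD1, hEa]; noncomm_ring
  rw [e4]
  refine (norm_add₃_le).trans ?_
  have p1 : ‖(1 + a) * (1 + b) * Ea‖ ≤ 4 * (3 * ‖a‖^2) := by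
    refine (norm_mul_le _ _).trans ?_
    refine mul_le_mul ((norm_mul_le _ _).trans ?_) bEa (norm_nonneg _) (by norm_num)
    calc ‖(1:A) + a‖ * ‖(1:A) + b‖ ≤ 2 * 2 :=
      mul_le_mul n1a n1b (norm_nonneg _) (by norm_num)
    _ = 4 := by norm_num
  have p2 : ‖D1 * u‖ ≤ (2 * (3 * ‖b‖^2) + (3 * ‖a‖^2) * 2 + (3*‖a‖^2) * (3*‖b‖^2)) * 5 := by
    refine (norm_mul_le _ _).trans ?_
    refine mul_le_mul bD1 bu (norm_nonneg _) ?_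
    positivity
  have p3 : ‖a*b + b*a + a*a + a*b*a‖ ≤ ‖a‖*‖b‖ + ‖b‖*‖a‖ + ‖a‖*‖a‖ + ‖a‖*‖b‖*‖a‖ := by
    refine (norm_add_le _ _).trans ?_
    have q4 : ‖a*b*a‖ ≤ ‖a‖*‖b‖*‖a‖ :=
      (norm_mul_le _ _).trans (mul_le_mul_of_nonneg_right (norm_mul_le _ _) (norm_nonneg _))
    have := norm_add₃_le (a := a*b) (b := b*a) (c := a*a)
    have q1 : ‖a*b‖ ≤ ‖a‖*‖b‖ := norm_mul_le _ _
    have q2 : ‖b*a‖ ≤ ‖b‖*‖a‖ := norm_mul_le _ _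
    have q3 : ‖a*a‖ ≤ ‖a‖*‖a‖ := norm_mul_le _ _
    linarith
  have hna : (0:ℝ) ≤ ‖a‖ := norm_nonneg a
  have hnb : (0:ℝ) ≤ ‖b‖ := norm_nonneg b
  have ha2 : ‖a‖^2 ≤ 1 := by nlinarith
  have hb2 : ‖b‖^2 ≤ 1 := by nlinarith
  have hq1 : ‖a‖^2*‖b‖^2 ≤ ‖a‖^2 := mul_le_of_le_one_right (sq_nonneg _) hb2
  have hq2 : ‖a‖^2*‖b‖ ≤ ‖a‖^2 := mul_le_of_le_one_right (sq_nonneg _) hb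
  have hq3 : ‖a‖*‖b‖^2 ≤ ‖b‖^2 := mul_le_of_le_one_left (sq_nonneg _) ha
  have hq4 : ‖a‖*‖b‖*‖a‖ ≤ ‖a‖^2 := by
    nlinarith [mul_nonneg (sq_nonneg ‖a‖) (sub_nonneg.2 hb)]
  nlinarith [mul_nonneg hna hnb, sq_nonneg ‖a‖, sq_nonneg ‖b‖]

private lemma spec_mem_ball' [Nontrivial A] {z : A} {t : ℝ} (ht : t ∈ spectrum ℝ z) :
    |t - 1| ≤ ‖z - 1‖ := by
  have h := spectrum.singleton_add_eq (R := ℝ) (z - 1) 1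
  have hz1 : (algebraMap ℝ A) 1 + (z - 1) = z := by
    rw [map_one]; abel
  rw [hz1] at h
  rw [← h, Set.mem_add] at ht
  obtain ⟨u, hu, s, hs, hts⟩ := ht
  rw [Set.mem_singleton_iff] at hu
  subst hu
  have hts' : t - 1 = s := by linarith
  rw [hts']
  simpa using spectrum.norm_le_norm_of_mem hs

private lemma log_approx' [Nontrivial A] (z : A) (hz : IsSelfAdjoint z) (hδ : ‖z - 1‖ ≤ 1/2) :
    ‖cfc Real.log z - (z - 1)‖ ≤ 2 * ‖z - 1‖ ^ 2 := by
  set δ := ‖z - 1‖ with hδdef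
  have hδ0 : 0 ≤ δ := norm_nonneg _
  have hpos : ∀ t ∈ spectrum ℝ z, (1:ℝ)/2 ≤ t := by
    intro t ht
    have := spec_mem_ball' ht
    have := abs_le.1 (this.trans hδ)
    linarith [this.1]
  have hcont : ContinuousOn Real.log (spectrum ℝ z) :=
    Real.continuousOn_log.mono fun t ht => by
      have := hpos t ht; simp; linarith
  have hcont2 : ContinuousOn (fun t : ℝ => t - 1) (spectrum ℝ z) := by fun_prop
  have h1 : cfc (fun t : ℝ => Real.log t - (t - 1)) z = cfc Real.log z - (z - 1) := by
    rw [cfc_sub _ _ z hcont hcont2]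
    congr 1
    have : cfc (fun t : ℝ => t - 1) z = cfc (fun t : ℝ => t) z - cfc (fun _ : ℝ => (1:ℝ)) z := by
      rw [← cfc_sub _ _ z (by fun_prop) (by fun_prop)]
    rw [this, cfc_id' ℝ z hz, cfc_const 1 z hz, map_one]
  rw [← h1]
  refine norm_cfc_le (by positivity) fun t ht => ?_
  have h2 := hpos t ht
  have h3 := spec_mem_ball' (z := z) ht
  have ht0 : 0 < t := by linarith
  have hup : Real.log t ≤ t - 1 := Real.log_le_sub_one_of_pos ht0
  have hlo : 1 - t⁻¹ ≤ Real.log t := by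
    have := Real.log_le_sub_one_of_pos (inv_pos.2 ht0)
    rw [Real.log_inv] at this
    linarith
  have hinv : t * t⁻¹ = 1 := mul_inv_cancel₀ ht0.ne'
  have hsq : (t - 1)^2 ≤ δ^2 := by
    have := abs_le.1 h3
    nlinarith [this.1, this.2]
  rw [Real.norm_eq_abs, abs_le]
  constructor
  · nlinarith
  · nlinarith

private lemma exp_smul_eq_cfc' (r : ℝ) (x : A) (hx : IsSelfAdjoint x) :
    NormedSpace.exp (r • x) = cfc (fun t : ℝ => Real.exp (r * t)) x := by
  have hsa : IsSelfAdjoint (r • x) := (IsSelfAdjoint.all r).smul hx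
  rw [← CFC.real_exp_eq_normedSpace_exp hsa]
  rw [← cfc_comp_smul r Real.exp x (by fun_prop) hx]
  simp [smul_eq_mul]

private lemma exp_smul_isSelfAdjoint' (r : ℝ) (x : A) (hx : IsSelfAdjoint x) :
    IsSelfAdjoint (NormedSpace.exp (r • x)) := by
  rw [exp_smul_eq_cfc' r x hx]; exact cfc_predicate _ _

private lemma invSqrt_exp' (r : ℝ) (x : A) (hx : IsSelfAdjoint x) :
    invSqrt (NormedSpace.exp (r • x)) = NormedSpace.exp ((-(r/2)) • x) := by
  rw [exp_smul_eq_cfc' r x hx, invSqrt]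
  have hg : ContinuousOn (fun t : ℝ => (Real.sqrt t)⁻¹)
      ((fun t : ℝ => Real.exp (r * t)) '' spectrum ℝ x) := by
    intro s hs
    obtain ⟨t, -, rfl⟩ := hs
    exact ((Real.continuous_sqrt.continuousAt.inv₀
      (Real.sqrt_pos.2 (Real.exp_pos _)).ne').continuousWithinAt)
  rw [← cfc_comp' (fun t : ℝ => (Real.sqrt t)⁻¹) (fun t : ℝ => Real.exp (r * t)) x hg (by fun_prop)]
  rw [exp_smul_eq_cfc' _ x hx]
  apply cfc_congr
  intro t ht
  show (Real.sqrt (Real.exp (r * t)))⁻¹ = Real.exp (-(r/2) * t)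
  have h1 : Real.exp (r * t) = (Real.exp (r/2 * t))^2 := by
    rw [sq, ← Real.exp_add]; ring_nf
  rw [h1, Real.sqrt_sq (Real.exp_nonneg _), ← Real.exp_neg]
  ring_nf

set_option maxHeartbeats 1000000 in
private lemma main_limit [Nontrivial A] (x y : A) (hx : IsSelfAdjoint x) (hy : IsSelfAdjoint y) :
    Tendsto (fun n : ℕ => (n : ℝ) *
        ‖cfc Real.log (NormedSpace.exp ((-(1 / (2 * (n : ℝ)))) • x) *
          NormedSpace.exp (((n : ℝ)⁻¹) • y) *
          NormedSpace.exp ((-(1 / (2 * (n : ℝ)))) • x))‖)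
      atTop (nhds ‖y - x‖) := by
  obtain ⟨w, hw⟩ : ∃ w : A, w = y - x := ⟨_, rfl⟩
  obtain ⟨K, hK⟩ : ∃ K : ℝ, K = ‖x‖ + ‖y‖ + 1 := ⟨_, rfl⟩
  have hK0 : 0 < K := by rw [hK]; positivity
  obtain ⟨M, hM⟩ : ∃ M : ℝ, M = ‖w‖ + 200 * K ^ 2 := ⟨_, rfl⟩
  have hM0 : 0 < M := by rw [hM]; positivity
  obtain ⟨C, hC⟩ : ∃ C : ℝ, C = 2 * M ^ 2 + 200 * K ^ 2 := ⟨_, rfl⟩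
  rw [← hw]
  suffices h : Tendsto (fun n : ℕ =>
      (n : ℝ) • cfc Real.log (NormedSpace.exp ((-(1 / (2 * (n : ℝ)))) • x) *
          NormedSpace.exp (((n : ℝ)⁻¹) • y) *
          NormedSpace.exp ((-(1 / (2 * (n : ℝ)))) • x))) atTop (nhds w) by
    refine h.norm.congr fun n => ?_
    rw [norm_smul, Real.norm_natCast]
  rw [← tendsto_sub_nhds_zero_iff]
  have hlim : Tendsto (fun n : ℕ => C * (n : ℝ)⁻¹) atTop (nhds 0) := by
    simpa using (tendsto_inv_atTop_nhds_zero_nat.const_mul C)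
  refine squeeze_zero_norm' ?_ hlim
  have hev1 : ∀ᶠ n : ℕ in atTop, K ≤ (n : ℝ) :=
    (tendsto_natCast_atTop_atTop (R := ℝ)).eventually_ge_atTop K
  have hev2 : ∀ᶠ n : ℕ in atTop, 2 * M ≤ (n : ℝ) :=
    (tendsto_natCast_atTop_atTop (R := ℝ)).eventually_ge_atTop (2 * M)
  have hev3 : ∀ᶠ n : ℕ in atTop, (1:ℝ) ≤ (n : ℝ) :=
    (tendsto_natCast_atTop_atTop (R := ℝ)).eventually_ge_atTop 1
  filter_upwards [hev1, hev2, hev3] with n hnK hnM hn1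
  have hn0 : (0:ℝ) < n := by linarith
  obtain ⟨ε, hε⟩ : ∃ ε : ℝ, ε = (n : ℝ)⁻¹ := ⟨_, rfl⟩
  have hε0 : 0 < ε := hε ▸ inv_pos.2 hn0
  have hεn : (n : ℝ) * ε = 1 := by rw [hε]; exact mul_inv_cancel₀ hn0.ne'
  have hε1 : ε ≤ 1 := by
    rw [hε]; exact inv_le_one_of_one_le₀ hn1
  have hεK : ε * K ≤ 1 := by
    have h' : ε * K ≤ ε * n := by gcongr
    rw [mul_comm ε (n:ℝ), hεn] at h'; exact h'
  have hεM : M * ε ≤ 1/2 := by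
    have h' := mul_le_mul_of_nonneg_right hnM hε0.le
    rw [hεn] at h'; linarith
  set an := (-(1 / (2 * (n : ℝ)))) • x with han
  set bn := ((n : ℝ)⁻¹) • y with hbn
  set zn := NormedSpace.exp an * NormedSpace.exp bn * NormedSpace.exp an with hzn
  -- selfadjointness of zn
  have hu := exp_smul_isSelfAdjoint' (-(1 / (2 * (n:ℝ)))) x hx
  have hv := exp_smul_isSelfAdjoint' ((n:ℝ)⁻¹) y hy
  rw [← han] at hu
  rw [← hbn] at hv
  have hzsa : IsSelfAdjoint zn := by
    rw [hzn, IsSelfAdjoint, star_mul, star_mul, hu.star_eq, hv.star_eq, ← mul_assoc]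
  -- norms of an and bn
  have hhalf : -(1 / (2 * (n:ℝ))) = -(ε / 2) := by rw [hε]; ring
  have hna : ‖an‖ = ε * (‖x‖ / 2) := by
    rw [han, hhalf, norm_smul, Real.norm_eq_abs, abs_neg, abs_of_nonneg (by positivity)]
    ring
  have hnb : ‖bn‖ = ε * ‖y‖ := by
    rw [hbn]
    simp only [norm_smul, Real.norm_eq_abs]
    rw [abs_of_nonneg (inv_nonneg.2 hn0.le), hε]
  have hxK : ‖x‖ ≤ K := by rw [hK]; linarith [norm_nonneg y]
  have hyK : ‖y‖ ≤ K := by rw [hK]; linarith [norm_nonneg x]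
  have hab : ‖an‖ + ‖bn‖ ≤ K * ε := by
    rw [hna, hnb]
    nlinarith [norm_nonneg x, norm_nonneg y, hε0.le]
  have ha1 : ‖an‖ ≤ 1 := by
    rw [hna]
    nlinarith [norm_nonneg x, hε0.le,
      mul_le_mul_of_nonneg_left hxK hε0.le]
  have hb1 : ‖bn‖ ≤ 1 := by
    rw [hnb]
    nlinarith [norm_nonneg y, hε0.le,
      mul_le_mul_of_nonneg_left hyK hε0.le]
  -- the exponential estimate
  have hsum : an + an + bn = ε • w := by
    rw [han, hbn, hw, hε]
    module
  have hT2 : ‖zn - 1 - an - an - bn‖ ≤ 200 * K ^ 2 * ε ^ 2 := by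
    refine (triple_bound' an bn ha1 hb1).trans ?_
    calc 200 * (‖an‖ + ‖bn‖) ^ 2 ≤ 200 * (K * ε) ^ 2 := by
          gcongr
      _ = 200 * K ^ 2 * ε ^ 2 := by ring
  clear_value an bn zn
  have hT3 : ‖zn - 1 - ε • w‖ ≤ 200 * K ^ 2 * ε ^ 2 := by
    have e : zn - 1 - an - an - bn = zn - 1 - ε • w := by
      rw [← hsum]; abel
    rw [← e]; exact hT2
  have hc : ‖zn - 1‖ ≤ M * ε := by
    have e : zn - 1 = (zn - 1 - ε • w) + ε • w := by abel
    rw [e]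
    refine (norm_add_le _ _).trans ?_
    have h1 : ‖ε • w‖ = ε * ‖w‖ := by
      rw [norm_smul, Real.norm_eq_abs, abs_of_nonneg hε0.le]
    rw [h1, hM]
    have h2 : 200 * K ^ 2 * ε ^ 2 ≤ 200 * K ^ 2 * ε := by
      calc 200 * K ^ 2 * ε ^ 2 = (200 * K ^ 2 * ε) * ε := by ring
        _ ≤ (200 * K ^ 2 * ε) * 1 := by
            have hpos : (0:ℝ) ≤ 200 * K ^ 2 * ε := by positivity
            exact mul_le_mul_of_nonneg_left hε1 hpos
        _ = 200 * K ^ 2 * ε := by ring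
    linarith [hT3, h2]
  have hc2 : ‖zn - 1‖ ≤ 1/2 := hc.trans hεM
  have hlog := log_approx' zn hzsa hc2
  have hlog2 : ‖cfc Real.log zn - (zn - 1)‖ ≤ 2 * M ^ 2 * ε ^ 2 := by
    refine hlog.trans ?_
    have h1 : ‖zn - 1‖ ^ 2 ≤ (M * ε) ^ 2 := by
      apply pow_le_pow_left₀ (norm_nonneg _) hc
    nlinarith
  -- final assembly
  have hwn : (n:ℝ) • (ε • w) = w := by
    rw [smul_smul, hεn, one_smul]
  have e5 : (n:ℝ) • cfc Real.log zn - w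
      = (n:ℝ) • (cfc Real.log zn - (zn - 1)) + (n:ℝ) • (zn - 1 - ε • w) := by
    have h1 : (n:ℝ) • (cfc Real.log zn - (zn - 1))
        = (n:ℝ) • cfc Real.log zn - (n:ℝ) • (zn - 1) := smul_sub _ _ _
    have h2 : (n:ℝ) • (zn - 1 - ε • w)
        = (n:ℝ) • (zn - 1) - (n:ℝ) • (ε • w) := smul_sub _ _ _
    rw [h1, h2, hwn]
    abel
  rw [e5]
  refine (norm_add_le _ _).trans ?_
  rw [norm_smul, norm_smul, Real.norm_natCast]
  have hnε2 : (n:ℝ) * ε ^ 2 = ε := by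
    rw [sq, ← mul_assoc, hεn, one_mul]
  have hεinv : ε = (n:ℝ)⁻¹ := hε
  calc (n:ℝ) * ‖cfc Real.log zn - (zn - 1)‖ + (n:ℝ) * ‖zn - 1 - ε • w‖
      ≤ (n:ℝ) * (2 * M ^ 2 * ε ^ 2) + (n:ℝ) * (200 * K ^ 2 * ε ^ 2) := by
        gcongr
    _ = C * ε := by rw [hC]; linear_combination (2*M^2 + 200*K^2) * hnε2
    _ = C * (n:ℝ)⁻¹ := by rw [hεinv]

end Aux

/-- Lie–Trotter-type asymptotics: for self-adjoint `x, y` in a unital C*-algebra,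
`n‖log(e^{-x/2n} e^{y/n} e^{-x/2n})‖ → ‖y − x‖`; in particular the Thompson metric
satisfies `n · d_T(e^{x/n}, e^{y/n}) → ‖x − y‖`. -/
theorem thompson_metric_lie_trotter_asymptotics
    {A : Type*} [CStarAlgebra A] [PartialOrder A] [StarOrderedRing A]
    (x y : A) (hx : IsSelfAdjoint x) (hy : IsSelfAdjoint y) :
    Tendsto (fun n : ℕ => (n : ℝ) *
        ‖cfc Real.log (NormedSpace.exp ((-(1 / (2 * (n : ℝ)))) • x) *
          NormedSpace.exp (((n : ℝ)⁻¹) • y) *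
          NormedSpace.exp ((-(1 / (2 * (n : ℝ)))) • x))‖)
      atTop (nhds ‖y - x‖) ∧
    Tendsto (fun n : ℕ => (n : ℝ) *
        thompsonDistLog (NormedSpace.exp (((n : ℝ)⁻¹) • x))
          (NormedSpace.exp (((n : ℝ)⁻¹) • y)))
      atTop (nhds ‖x - y‖) := by
  rcases subsingleton_or_nontrivial A with hS | hN
  · have h0 : ∀ a : A, ‖a‖ = 0 := fun a => by rw [Subsingleton.elim a 0, norm_zero]
    constructor
    · simp only [h0, mul_zero]
      exact tendsto_const_nhds
    · simp only [thompsonDistLog, h0, mul_zero]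
      exact tendsto_const_nhds
  · refine ⟨main_limit x y hx hy, ?_⟩
    have key : ∀ n : ℕ, thompsonDistLog (NormedSpace.exp (((n : ℝ)⁻¹) • x))
          (NormedSpace.exp (((n : ℝ)⁻¹) • y))
        = ‖cfc Real.log (NormedSpace.exp ((-(1 / (2 * (n : ℝ)))) • x) *
            NormedSpace.exp (((n : ℝ)⁻¹) • y) *
            NormedSpace.exp ((-(1 / (2 * (n : ℝ)))) • x))‖ := by
      intro n
      have hsc : (-(((n:ℝ)⁻¹)/2)) = (-(1/(2*(n:ℝ)))) := by ring
      rw [thompsonDistLog, invSqrt_exp' _ x hx, hsc]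
    have h1 := main_limit x y hx hy
    rw [show ‖y - x‖ = ‖x - y‖ from norm_sub_rev y x] at h1
    exact h1.congr fun n => by rw [key n]
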